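/- (SAM contraction on identical examples.) Let f : ℝ^d → ℝ be differentiable, μ-strongly convex and L-smooth with 0 < μ ≤ L, let ρ > 0, and let the learning rate η > 0 satisfy η ≤ 2/(μ+L) − (μ+L)/(2μL(μ/(ρL²) + 1)). For w, v ∈ ℝ^d define the SAM updates w' = w − η∇f(w + ρ∇f(w)) and v' = v − η∇f(v + ρ∇f(v)). Then ‖v' − w'‖ ≤ (1 − (1 + μρ)·ημL/(μ+L))·‖v − w‖. -/

import Mathlib

open RealInnerProductSpace



variable {E : Type*} [NormedAddCommGroup E] [InnerProductSpace ℝ E] [CompleteSpace E]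

lemma HasGradientAt.sub'' {f g : E → ℝ} {a b x : E} (hf : HasGradientAt f a x)
    (hg : HasGradientAt g b x) : HasGradientAt (fun y => f y - g y) (a - b) x := by
  rw [hasGradientAt_iff_hasFDerivAt] at *
  rw [map_sub]
  exact hf.sub hg

lemma hasGradientAt_half_sq (c : ℝ) (x : E) :
    HasGradientAt (fun y : E => c / 2 * ‖y‖ ^ 2) (c • x) x := by
  have h := ((hasFDerivAt_id (𝕜 := ℝ) x).inner ℝ (hasFDerivAt_id x)).const_mul (c / 2)
  rw [hasGradientAt_iff_hasFDerivAt]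
  have hfun : (fun y : E => c / 2 * ‖y‖ ^ 2) = fun y : E => c / 2 * ⟪y, y⟫ := by
    funext y; rw [real_inner_self_eq_norm_sq]
  rw [hfun]
  convert h using 1
  · rfl
  · rfl
  apply ContinuousLinearMap.ext; intro y
  simp [fderivInnerCLM_apply, InnerProductSpace.toDual_apply_apply, real_inner_smul_left,
    real_inner_comm]
  ring

/-- A differentiable function with monotone gradient lies above its tangent planes. -/
lemma tangent_le (φ : E → ℝ) (G : E → E) (hG : ∀ x, HasGradientAt φ (G x) x)
    (hmono : ∀ x y : E, 0 ≤ ⟪G x - G y, x - y⟫) (x z : E) :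
    φ x + ⟪G x, z - x⟫ ≤ φ z := by
  set d := z - x with hd
  set ψ : ℝ → ℝ := fun t => φ (x + t • d) with hψ
  have hderiv : ∀ t : ℝ, HasDerivAt ψ ⟪G (x + t • d), d⟫ t := by
    intro t
    have hγ : HasDerivAt (fun t : ℝ => x + t • d) d t := by
      simpa using ((hasDerivAt_id t).smul_const d).const_add x
    have := (hG (x + t • d)).hasFDerivAt.comp_hasDerivAt t hγ
    simp [InnerProductSpace.toDual_apply_apply] at this
    rw [hψ]; exact this
  obtain ⟨c, hc, hceq⟩ := exists_hasDerivAt_eq_slope ψ (fun t => ⟪G (x + t • d), d⟫)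
    (by norm_num : (0:ℝ) < 1)
    (fun t _ => (hderiv t).continuousAt.continuousWithinAt)
    (fun t _ => hderiv t)
  have h0 : ⟪G x, d⟫ ≤ ⟪G (x + c • d), d⟫ := by
    have hm := hmono (x + c • d) x
    have hxx : (x + c • d) - x = c • d := by abel
    rw [hxx, real_inner_smul_right, inner_sub_left] at hm
    nlinarith [hc.1]
  have hψ1 : ψ 1 = φ z := by simp [hψ, hd]
  have hψ0 : ψ 0 = φ x := by simp [hψ]
  rw [hψ1, hψ0] at hceq
  have : ⟪G (x + c • d), d⟫ = φ z - φ x := by rw [hceq]; ring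
  linarith [h0, this.le, this.ge]

/-- Co-coercivity for a strongly convex smooth function. -/
lemma cocoercive (f : E → ℝ) (μ L : ℝ) (hμ : 0 < μ) (hμL : μ ≤ L)
    (hdiff : Differentiable ℝ f)
    (hsc : ∀ v w : E, μ * ‖v - w‖ ^ 2 ≤ ⟪gradient f v - gradient f w, v - w⟫)
    (hsm : ∀ v w : E, ‖gradient f v - gradient f w‖ ≤ L * ‖v - w‖) (x y : E) :
    ‖gradient f x - gradient f y‖ ^ 2 + μ * L * ‖x - y‖ ^ 2
      ≤ (μ + L) * ⟪gradient f x - gradient f y, x - y⟫ := by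
  rcases eq_or_lt_of_le hμL with rfl | hlt
  · have h1 := hsc x y
    have h2 := pow_le_pow_left₀ (norm_nonneg _) (hsm x y) 2
    nlinarith [h1, h2]
  · -- μ < L
    have hLμ : 0 < L - μ := by linarith
    set Fh : E → ℝ := fun z => f z - μ / 2 * ‖z‖ ^ 2 with hFh
    set Gh : E → E := fun z => gradient f z - μ • z with hGh
    set Fg : E → ℝ := fun z => L / 2 * ‖z‖ ^ 2 - f z with hFg
    set Gg : E → E := fun z => L • z - gradient f z with hGg
    have hGh' : ∀ z, HasGradientAt Fh (Gh z) z := fun z =>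
      ((hdiff z).hasGradientAt).sub'' (hasGradientAt_half_sq μ z)
    have hGg' : ∀ z, HasGradientAt Fg (Gg z) z := fun z =>
      (hasGradientAt_half_sq L z).sub'' ((hdiff z).hasGradientAt)
    have hGhsub : ∀ p q : E, Gh p - Gh q = (gradient f p - gradient f q) - μ • (p - q) := by
      intro p q; simp only [hGh, smul_sub]; abel
    have hGgsub : ∀ p q : E, Gg p - Gg q = L • (p - q) - (gradient f p - gradient f q) := by
      intro p q; simp only [hGg, smul_sub]; abel
    have hmonoh : ∀ p q : E, 0 ≤ ⟪Gh p - Gh q, p - q⟫ := by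
      intro p q
      rw [hGhsub, inner_sub_left, real_inner_smul_left, real_inner_self_eq_norm_sq]
      linarith [hsc p q]
    have hmonog : ∀ p q : E, 0 ≤ ⟪Gg p - Gg q, p - q⟫ := by
      intro p q
      rw [hGgsub, inner_sub_left, real_inner_smul_left, real_inner_self_eq_norm_sq]
      have h1 := real_inner_le_norm (gradient f p - gradient f q) (p - q)
      have h2 := hsm p q
      nlinarith [norm_nonneg (p - q)]
    -- descent lemma for Fh
    have descent : ∀ p q : E, Fh q ≤ Fh p + ⟪Gh p, q - p⟫ + (L - μ) / 2 * ‖q - p‖ ^ 2 := by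
      intro p q
      have h2 := tangent_le Fg Gg hGg' hmonog p q
      have hid : ‖q - p‖ ^ 2 = ‖q‖ ^ 2 - 2 * ⟪p, q⟫ + ‖p‖ ^ 2 := by
        rw [norm_sub_sq_real, real_inner_comm q p]; try ring
      simp only [hFg, hFh, hGg, hGh, inner_sub_left, real_inner_smul_left,
        inner_sub_right, real_inner_self_eq_norm_sq] at h2 ⊢
      nlinarith [h2, hid]
    -- key one-sided inequality
    have key : ∀ p q : E,
        Fh p + ⟪Gh p, q - p⟫ + 1 / (2 * (L - μ)) * ‖Gh q - Gh p‖ ^ 2 ≤ Fh q := by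
      intro p q
      set e : E := Gh q - Gh p with he
      set z : E := q - (L - μ)⁻¹ • e with hz
      have h1 := tangent_le Fh Gh hGh' hmonoh p z
      have h2 := descent q z
      have hzq : z - q = -((L - μ)⁻¹ • e) := by rw [hz]; abel
      have hzp : z - p = (q - p) - (L - μ)⁻¹ • e := by rw [hz]; abel
      have hnz : ‖z - q‖ ^ 2 = (L - μ)⁻¹ ^ 2 * ‖e‖ ^ 2 := by
        rw [hzq, norm_neg, norm_smul, mul_pow, Real.norm_eq_abs, sq_abs]
      have hip : ⟪Gh p, z - p⟫ = ⟪Gh p, q - p⟫ - (L - μ)⁻¹ * ⟪Gh p, e⟫ := by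
        rw [hzp, inner_sub_right, real_inner_smul_right]
      have hiq : ⟪Gh q, z - q⟫ = -((L - μ)⁻¹ * ⟪Gh q, e⟫) := by
        rw [hzq, inner_neg_right, real_inner_smul_right]
      have hee : ⟪Gh q, e⟫ - ⟪Gh p, e⟫ = ‖e‖ ^ 2 := by
        rw [← inner_sub_left, ← he, real_inner_self_eq_norm_sq]
      rw [hip] at h1
      rw [hiq, hnz] at h2
      have hinv : (L - μ) / 2 * ((L - μ)⁻¹ ^ 2 * ‖e‖ ^ 2) = 1 / (2 * (L - μ)) * ‖e‖ ^ 2 := by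
        field_simp
      have hee' : (L - μ)⁻¹ * ⟪Gh q, e⟫ - (L - μ)⁻¹ * ⟪Gh p, e⟫ = (L - μ)⁻¹ * ‖e‖ ^ 2 := by
        rw [← mul_sub, hee]
      have hinv2 : (L - μ)⁻¹ * ‖e‖ ^ 2 = 2 * (1 / (2 * (L - μ)) * ‖e‖ ^ 2) := by
        field_simp
      linarith [h1, h2, hee', hinv, hinv2]
    have k1 := key x y
    have k2 := key y x
    have hnrev : ‖Gh x - Gh y‖ = ‖Gh y - Gh x‖ := norm_sub_rev _ _
    have hsum : 1 / (L - μ) * ‖Gh y - Gh x‖ ^ 2 ≤ ⟪Gh x - Gh y, x - y⟫ := by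
      have hxy : ⟪Gh y, x - y⟫ = -⟪Gh y, y - x⟫ := by
        rw [← inner_neg_right]; congr 1; abel
      have hsplit : ⟪Gh x - Gh y, x - y⟫ = ⟪Gh x, x - y⟫ - ⟪Gh y, x - y⟫ := by
        rw [inner_sub_left]
      have hxy2 : ⟪Gh x, y - x⟫ = -⟪Gh x, x - y⟫ := by
        rw [← inner_neg_right]; congr 1; abel
      have h2inv : 1 / (L - μ) * ‖Gh y - Gh x‖ ^ 2
          = 2 * (1 / (2 * (L - μ)) * ‖Gh y - Gh x‖ ^ 2) := by
        field_simp
      rw [hsplit, hxy]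
      rw [hnrev] at k2
      rw [hxy2] at k1
      linarith [k1, k2, h2inv]
    -- expand and conclude
    have hQ : ⟪Gh x - Gh y, x - y⟫
        = ⟪gradient f x - gradient f y, x - y⟫ - μ * ‖x - y‖ ^ 2 := by
      rw [hGhsub, inner_sub_left, real_inner_smul_left, real_inner_self_eq_norm_sq]
    have hN : ‖Gh y - Gh x‖ ^ 2 = ‖gradient f x - gradient f y‖ ^ 2
        - 2 * μ * ⟪gradient f x - gradient f y, x - y⟫ + μ ^ 2 * ‖x - y‖ ^ 2 := by
      rw [← hnrev, hGhsub, norm_sub_sq_real, real_inner_smul_right, norm_smul,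
        Real.norm_eq_abs, mul_pow, sq_abs]
      ring
    rw [hQ, hN] at hsum
    set n := ‖gradient f x - gradient f y‖ ^ 2 with hn
    set dd := ‖x - y‖ ^ 2 with hdd
    set pp : ℝ := ⟪gradient f x - gradient f y, x - y⟫ with hpp
    have h2' := mul_le_mul_of_nonneg_left hsum (le_of_lt hLμ)
    have hcan : (L - μ) * (1 / (L - μ) * (n - 2 * μ * pp + μ ^ 2 * dd))
        = n - 2 * μ * pp + μ ^ 2 * dd := by
      field_simp
    rw [hcan] at h2'
    nlinarith [h2']

/-- Weighted AM-GM. -/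
lemma sam_amgm (W X Y A B : ℝ) (hA : 0 ≤ A) (hB : 0 ≤ B) (hY : 0 < Y) (h : W ^ 2 ≤ X * Y) :
    2 * W * (A * B) ≤ X * A ^ 2 + Y * B ^ 2 := by
  nlinarith [sq_nonneg (W * A - Y * B), mul_nonneg (sub_nonneg.mpr h) (sq_nonneg A), hY,
    mul_nonneg hA hB]

/-- Pure scalar core of the SAM contraction argument. -/
lemma sam_scalar (μ L ρ η U A B p q r N : ℝ)
    (hμ : 0 < μ) (hμL : μ ≤ L) (hρ : 0 < ρ) (hη : 0 < η)
    (hηle : η ≤ 2 / (μ + L) - (μ + L) / (2 * μ * L * (μ / (ρ * L ^ 2) + 1)))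
    (hU : 0 < U) (hA : 0 ≤ A) (hB : 0 ≤ B) (hN : 0 ≤ N)
    (hco : A ^ 2 + μ * L * (U ^ 2 + 2 * ρ * q + ρ ^ 2 * B ^ 2) ≤ (μ + L) * (p + ρ * r))
    (F2 : μ * U ^ 2 ≤ q) (F3 : B ≤ L * U) (F4 : r ≤ A * B)
    (hns : N ^ 2 = U ^ 2 - 2 * η * p + η ^ 2 * A ^ 2) :
    N ≤ (1 - (1 + μ * ρ) * η * μ * L / (μ + L)) * U := by
  have hL : 0 < L := lt_of_lt_of_le hμ hμL
  have hS : 0 < μ + L := by linarith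
  have F3' : B ^ 2 ≤ L ^ 2 * U ^ 2 := by nlinarith [F3, hB, hU.le, hL.le]
  have hX : 0 < 2 * μ * L * (μ / (ρ * L ^ 2) + 1) := by positivity
  have h6a : (μ + L) / (2 * μ * L * (μ / (ρ * L ^ 2) + 1)) ≤ 2 / (μ + L) - η := by
    linarith [hηle]
  rw [div_le_iff₀ hX] at h6a
  have h6b : (μ + L) ^ 2 ≤ (2 - (μ + L) * η) * (2 * μ * L * (μ / (ρ * L ^ 2) + 1)) := by
    have h2 := mul_le_mul_of_nonneg_right h6a hS.le
    have h3 : (2 / (μ + L) - η) * (2 * μ * L * (μ / (ρ * L ^ 2) + 1)) * (μ + L)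
        = (2 - (μ + L) * η) * (2 * μ * L * (μ / (ρ * L ^ 2) + 1)) := by
      field_simp
    calc (μ + L) ^ 2 = (μ + L) * (μ + L) := by ring
      _ ≤ (2 / (μ + L) - η) * (2 * μ * L * (μ / (ρ * L ^ 2) + 1)) * (μ + L) := h2
      _ = _ := h3
  have hXid : (2 * μ * L * (μ / (ρ * L ^ 2) + 1)) * (ρ * L ^ 2)
      = 2 * μ * L * (μ + ρ * L ^ 2) := by
    field_simp
    try ring
  have H6 : (μ + L) ^ 2 * (ρ * L ^ 2) ≤ (2 - (μ + L) * η) * (2 * μ * L * (μ + ρ * L ^ 2)) := by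
    calc (μ + L) ^ 2 * (ρ * L ^ 2)
        ≤ ((2 - (μ + L) * η) * (2 * μ * L * (μ / (ρ * L ^ 2) + 1))) * (ρ * L ^ 2) :=
          mul_le_mul_of_nonneg_right h6b (by positivity)
      _ = _ := by rw [mul_assoc, hXid]
  have hYpos : 0 < 2 * μ * L * ρ * (μ + ρ * L ^ 2) := by positivity
  have hWXY : ((μ + L) * (ρ * L ^ 2)) ^ 2
      ≤ ((2 - (μ + L) * η) * L ^ 2) * (2 * μ * L * ρ * (μ + ρ * L ^ 2)) := by
    have h := mul_le_mul_of_nonneg_right H6 (show (0:ℝ) ≤ ρ * L ^ 2 by positivity)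
    linarith [h]
  have hbr : 2 * ((μ + L) * (ρ * L ^ 2)) * (A * B)
      ≤ (2 - (μ + L) * η) * L ^ 2 * A ^ 2 + 2 * μ * L * ρ * (μ + ρ * L ^ 2) * B ^ 2 := by
    have := sam_amgm ((μ + L) * (ρ * L ^ 2)) ((2 - (μ + L) * η) * L ^ 2)
      (2 * μ * L * ρ * (μ + ρ * L ^ 2)) A B hA hB hYpos hWXY
    linarith [this]
  have hH1' := mul_le_mul_of_nonneg_left hco (by positivity : (0:ℝ) ≤ 2 * L ^ 2)
  have hH4' := mul_le_mul_of_nonneg_left F4 (by positivity : (0:ℝ) ≤ 2 * (μ + L) * ρ * L ^ 2)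
  have hH2' := mul_le_mul_of_nonneg_left F2 (by positivity : (0:ℝ) ≤ 4 * μ * L * ρ * L ^ 2)
  have hH3' := mul_le_mul_of_nonneg_left F3' (by positivity : (0:ℝ) ≤ 2 * μ ^ 2 * L * ρ)
  have G'' : (2 * (1 + μ * ρ) * (μ * L) * U ^ 2) * L ^ 2
      ≤ (2 * (μ + L) * p - (μ + L) * η * A ^ 2) * L ^ 2 := by
    linarith only [hH1', hH4', hH2', hH3', hbr]
  have G' : 2 * (1 + μ * ρ) * (μ * L) * U ^ 2
      ≤ 2 * (μ + L) * p - (μ + L) * η * A ^ 2 :=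
    le_of_mul_le_mul_right G'' (by positivity)
  have hGη := mul_le_mul_of_nonneg_left G' hη.le
  have hsq : N ^ 2 * (μ + L) ≤ ((μ + L) - 2 * (1 + μ * ρ) * μ * L * η) * U ^ 2 := by
    rw [hns]; linarith only [hGη]
  have hx2 : 0 ≤ (μ + L) - 2 * (1 + μ * ρ) * μ * L * η := by
    have h0 : 0 ≤ U ^ 2 * ((μ + L) - 2 * (1 + μ * ρ) * μ * L * η) := by
      rw [mul_comm]; exact le_trans (mul_nonneg (sq_nonneg N) hS.le) hsq
    exact nonneg_of_mul_nonneg_right h0 (pow_pos hU 2)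
  set x := (1 + μ * ρ) * η * μ * L / (μ + L) with hx
  have hxS : x * (μ + L) = (1 + μ * ρ) * η * μ * L := by rw [hx]; field_simp
  have hxhalf : x ≤ 1 / 2 := by nlinarith only [hx2, hxS, hS]
  have h1x : 0 ≤ 1 - x := by linarith
  have hxS2 : x * (μ + L) * U ^ 2 = (1 + μ * ρ) * η * μ * L * U ^ 2 := by rw [hxS]
  have hfinsq : N ^ 2 ≤ ((1 - x) * U) ^ 2 := by
    have h1 : N ^ 2 * (μ + L) ≤ ((1 - x) * U) ^ 2 * (μ + L) := by
      nlinarith only [hsq, hxS2, mul_nonneg (sq_nonneg (x * U)) hS.le]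
    exact le_of_mul_le_mul_right h1 hS
  calc N = Real.sqrt (N ^ 2) := (Real.sqrt_sq hN).symm
    _ ≤ Real.sqrt (((1 - x) * U) ^ 2) := Real.sqrt_le_sqrt hfinsq
    _ = (1 - x) * U := Real.sqrt_sq (mul_nonneg h1x hU.le)



/-- SAM contraction on identical examples: if the learning rate satisfies
`η ≤ 2/(μ+L) − (μ+L)/(2μL(μ/(ρL²) + 1))`, then the SAM updates
`w' = w − η∇f(w + ρ∇f w)` and `v' = v − η∇f(v + ρ∇f v)` satisfy
`‖v' − w'‖ ≤ (1 − (1 + μρ)ημL/(μ+L))‖v − w‖`. -/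
theorem sam_contraction_same_example {d : ℕ}
    (f : EuclideanSpace ℝ (Fin d) → ℝ) (μ L ρ η : ℝ)
    (hμ : 0 < μ) (hμL : μ ≤ L) (hρ : 0 < ρ) (hη : 0 < η)
    (hηle : η ≤ 2 / (μ + L) - (μ + L) / (2 * μ * L * (μ / (ρ * L ^ 2) + 1)))
    (hdiff : Differentiable ℝ f)
    (hsc : ∀ v w : EuclideanSpace ℝ (Fin d),
      μ * ‖v - w‖ ^ 2 ≤ ⟪gradient f v - gradient f w, v - w⟫)
    (hsm : ∀ v w : EuclideanSpace ℝ (Fin d),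
      ‖gradient f v - gradient f w‖ ≤ L * ‖v - w‖)
    (w v : EuclideanSpace ℝ (Fin d)) :
    ‖(v - η • gradient f (v + ρ • gradient f v))
        - (w - η • gradient f (w + ρ • gradient f w))‖
      ≤ (1 - (1 + μ * ρ) * η * μ * L / (μ + L)) * ‖v - w‖ := by
  rcases eq_or_ne v w with rfl | hvw
  · simp
  set vp := v + ρ • gradient f v with hvp
  set wp := w + ρ • gradient f w with hwp
  set u := v - w with hu
  set a := gradient f vp - gradient f wp with ha
  set b := gradient f v - gradient f w with hb
  have hU : 0 < ‖u‖ := by rw [hu]; exact norm_pos_iff.mpr (sub_ne_zero.mpr hvw)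
  have hvec : v - η • gradient f vp - (w - η • gradient f wp) = u - η • a := by
    rw [hu, ha, smul_sub]; abel
  rw [hvec]
  have hco := cocoercive f μ L hμ hμL hdiff hsc hsm vp wp
  rw [← ha] at hco
  have ht : vp - wp = u + ρ • b := by rw [hvp, hwp, hu, hb, smul_sub]; abel
  rw [ht] at hco
  have hTn : ‖u + ρ • b‖ ^ 2 = ‖u‖ ^ 2 + 2 * ρ * ⟪b, u⟫ + ρ ^ 2 * ‖b‖ ^ 2 := by
    rw [norm_add_sq_real, real_inner_smul_right, real_inner_comm u b, norm_smul,
      Real.norm_eq_abs, mul_pow, sq_abs]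
    ring
  have hTi : ⟪a, u + ρ • b⟫ = ⟪a, u⟫ + ρ * ⟪a, b⟫ := by
    rw [inner_add_right, real_inner_smul_right]
  rw [hTn, hTi] at hco
  have F2 : μ * ‖u‖ ^ 2 ≤ ⟪b, u⟫ := by
    have h := hsc v w; rw [← hb, ← hu] at h; exact h
  have F3 : ‖b‖ ≤ L * ‖u‖ := by
    have h := hsm v w; rw [← hb, ← hu] at h; exact h
  have F4 : ⟪a, b⟫ ≤ ‖a‖ * ‖b‖ := real_inner_le_norm a b
  have hns : ‖u - η • a‖ ^ 2 = ‖u‖ ^ 2 - 2 * η * ⟪a, u⟫ + η ^ 2 * ‖a‖ ^ 2 := by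
    rw [norm_sub_sq_real, real_inner_smul_right, real_inner_comm u a, norm_smul,
      Real.norm_eq_abs, mul_pow, sq_abs]
    ring
  exact sam_scalar μ L ρ η ‖u‖ ‖a‖ ‖b‖ ⟪a, u⟫ ⟪b, u⟫ ⟪a, b⟫ ‖u - η • a‖
    hμ hμL hρ hη hηle hU (norm_nonneg a) (norm_nonneg b) (norm_nonneg _)
    hco F2 F3 F4 hns
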